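/- Let K be a finite simplicial complex such that there exists a faithful continuous map f: |K'| → ℝ^d. Then K is d-Matoušek: there exists a continuous map g: Ĥ(K) → S^{d-1} with g(y,x) = -g(x,y) for all (x,y) ∈ Ĥ(K), where Ĥ(K) = {(x,y) ∈ |K'|² : (⋂ supp(x)) ∪ (⋂ supp(y)) ∉ K}. One may take g(x,y) = (f(x)-f(y))/|f(x)-f(y)|. -/
import Mathlib


open scoped BigOperators

noncomputable section

variable {V : Type*} [Fintype V] [DecidableEq V]

def IsComplex (K : Finset (Finset V)) : Prop :=
  ∅ ∈ K ∧ (∀ v : V, {v} ∈ K) ∧ ∀ F ∈ K, ∀ G ⊆ F, G ∈ K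

def facets (K : Finset (Finset V)) : Finset (Finset V) :=
  K.filter fun J => ∀ J' ∈ K, J ⊆ J' → J = J'

def contV (K : Finset (Finset V)) (i : V) : Finset (Finset V) :=
  (facets K).filter fun J => i ∈ J

def dual (K : Finset (Finset V)) : Finset (Finset (Finset V)) :=
  (facets K).powerset.filter fun α => (α.inf id).Nonempty

def geomFace {W : Type*} [Fintype W] (F : Finset W) : Set (W → ℝ) :=
  {x | (∀ w, 0 ≤ x w) ∧ (∑ w, x w) = 1 ∧ ∀ w, x w ≠ 0 → w ∈ F}

def geom {W : Type*} [Fintype W] (L : Finset (Finset W)) : Set (W → ℝ) :=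
  ⋃ F ∈ L, geomFace F

def supp {W : Type*} [Fintype W] [DecidableEq W] (x : W → ℝ) : Finset W :=
  Finset.univ.filter fun w => x w ≠ 0

def Faithful {d : ℕ} (K : Finset (Finset V))
    (f : (Finset V → ℝ) → EuclideanSpace ℝ (Fin d)) : Prop :=
  ∀ I : Finset V, (⋂ i ∈ I, f '' geomFace (contV K i)).Nonempty → I ∈ K

def affExt {W : Type*} [Fintype W] {E : Type*} [AddCommGroup E] [Module ℝ E]
    (p : W → E) (x : W → ℝ) : E := ∑ w, x w • p w

def Hhat (K : Finset (Finset V)) : Set ((Finset V → ℝ) × (Finset V → ℝ)) :=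
  {z | z.1 ∈ geom (dual K) ∧ z.2 ∈ geom (dual K) ∧
    ((supp z.1).inf id ∪ (supp z.2).inf id) ∉ K}

def Matousek (d : ℕ) (K : Finset (Finset V)) : Prop :=
  ∃ g : Hhat K → EuclideanSpace ℝ (Fin d),
    Continuous g ∧ (∀ z, ‖g z‖ = 1) ∧
    ∀ (x y : Finset V → ℝ) (hxy : (x, y) ∈ Hhat K) (hyx : (y, x) ∈ Hhat K),
      g ⟨(y, x), hyx⟩ = - g ⟨(x, y), hxy⟩

def Representable (d : ℕ) (K : Finset (Finset V)) : Prop :=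
  ∃ C : V → Set (EuclideanSpace ℝ (Fin d)),
    (∀ i, Convex ℝ (C i)) ∧ ∀ I : Finset V, I ∈ K ↔ (⋂ i ∈ I, C i).Nonempty

def dimOf {W : Type*} [Fintype W] [DecidableEq W] (L : Finset (Finset W)) : ℕ :=
  (L.sup Finset.card) - 1

lemma mem_geomFace_contV {K : Finset (Finset V)} {x : Finset V → ℝ}
    (hx : x ∈ geom (dual K)) {i : V} (hi : i ∈ (supp x).inf id) :
    x ∈ geomFace (contV K i) := by
  rw [geom, Set.mem_iUnion₂] at hx
  obtain ⟨α, hα, hxα⟩ := hx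
  rw [dual, Finset.mem_filter, Finset.mem_powerset] at hα
  refine ⟨hxα.1, hxα.2.1, ?_⟩
  intro J hJ
  have hJs : J ∈ supp x := by simp [supp, hJ]
  have hle : (supp x).inf id ≤ id J := Finset.inf_le hJs
  exact Finset.mem_filter.2 ⟨hα.1 (hxα.2.2 J hJ), hle hi⟩

lemma ne_of_Hhat {d : ℕ} {K : Finset (Finset V)}
    {f : (Finset V → ℝ) → EuclideanSpace ℝ (Fin d)} (hfaith : Faithful K f)
    {z : (Finset V → ℝ) × (Finset V → ℝ)} (hz : z ∈ Hhat K) :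
    f z.1 ≠ f z.2 := by
  intro heq
  obtain ⟨hx, hy, hnK⟩ := hz
  apply hnK
  apply hfaith
  refine ⟨f z.1, Set.mem_iInter₂.2 fun i hi => ?_⟩
  rcases Finset.mem_union.1 hi with h | h
  · exact ⟨z.1, mem_geomFace_contV hx h, rfl⟩
  · exact ⟨z.2, mem_geomFace_contV hy h, heq.symm⟩

/-- existence of a faithful continuous map `|K'| → ℝ^d` implies
that `K` is `d`-Matoušek. -/
theorem stmt8 {d : ℕ} (K : Finset (Finset V)) (hK : IsComplex K)
    (f : (Finset V → ℝ) → EuclideanSpace ℝ (Fin d))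
    (hcont : ContinuousOn f (geom (dual K)))
    (hfaith : Faithful K f) :
    Matousek d K := by
  set h : Hhat K → EuclideanSpace ℝ (Fin d) :=
    fun z => f z.1.1 - f z.1.2 with hh_def
  have hne : ∀ z, h z ≠ 0 := fun z => sub_ne_zero.2 (ne_of_Hhat hfaith z.2)
  have hc1 : Continuous fun z : Hhat K => f z.1.1 :=
    hcont.comp_continuous (continuous_fst.comp continuous_subtype_val)
      fun z => z.2.1
  have hc2 : Continuous fun z : Hhat K => f z.1.2 :=
    hcont.comp_continuous (continuous_snd.comp continuous_subtype_val)
      fun z => z.2.2.1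
  have hch : Continuous h := hc1.sub hc2
  refine ⟨fun z => ‖h z‖⁻¹ • h z, ?_, ?_, ?_⟩
  · exact (hch.norm.inv₀ fun z => norm_ne_zero_iff.2 (hne z)).smul hch
  · intro z
    rw [norm_smul, norm_inv, norm_norm,
      inv_mul_cancel₀ (norm_ne_zero_iff.2 (hne z))]
  · intro x y hxy hyx
    have hnorm : ‖f y - f x‖ = ‖f x - f y‖ := norm_sub_rev _ _
    show ‖f y - f x‖⁻¹ • (f y - f x) = -(‖f x - f y‖⁻¹ • (f x - f y))
    rw [show f y - f x = -(f x - f y) from (neg_sub _ _).symm, norm_neg, smul_neg]
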